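/- Let E be a topological graph and v ∈ E⁰. Then the closure of the positive orbit, X⁰ = closure(Orb⁺(v)), is positively invariant; moreover X⁰ is negatively invariant whenever at least one of the following holds: (i) v ∈ E⁰_sg; (ii) v is not an isolated point of Orb⁺(v); (iii) v is the base point of a loop (i.e., there exists n ≥ 1 and e ∈ Eⁿ with dⁿ(e) = rⁿ(e) = v). -/

import Mathlib

open Set Topology

variable {E0 E1 : Type*} [TopologicalSpace E0] [TopologicalSpace E1]

/-- A set is positively invariant if the range of every edge with domain in it lies in it. -/
def PosInv (d r : E1 → E0) (X : Set E0) : Prop := ∀ e : E1, d e ∈ X → r e ∈ X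

/-- Sources: `E⁰ \ closure (r (E¹))`. -/
def Sce (r : E1 → E0) : Set E0 := (closure (Set.range r))ᶜ

/-- Vertices having a neighborhood with compact `r`-preimage. -/
def FinSet (r : E1 → E0) : Set E0 := {v | ∃ V ∈ 𝓝 v, IsCompact (r ⁻¹' V)}

/-- Regular vertices. -/
def Rg (r : E1 → E0) : Set E0 := FinSet r \ closure (Sce r)

/-- Singular vertices. -/
def Sg (r : E1 → E0) : Set E0 := (Rg r)ᶜ

/-- A set is negatively invariant if every regular vertex in it receives an edge from it. -/
def NegInv (d r : E1 → E0) (X : Set E0) : Prop :=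
  ∀ v ∈ X ∩ Rg r, ∃ e : E1, r e = v ∧ d e ∈ X

/-- Invariant = positively and negatively invariant. -/
def Invariant (d r : E1 → E0) (X : Set E0) : Prop := PosInv d r X ∧ NegInv d r X

/-- The chain condition for a finite path `(e 0, e 1, …, e n)` of edges:
`d (e k) = r (e (k+1))`. -/
def IsPath (d r : E1 → E0) {n : ℕ} (e : Fin (n + 1) → E1) : Prop :=
  ∀ i : Fin n, d (e i.castSucc) = r (e i.succ)

/-- The positive orbit `Orb⁺(v)`: ranges of finite paths with domain `v`. -/
def OrbPlus (d r : E1 → E0) (v : E0) : Set E0 :=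
  {v} ∪ {w | ∃ n : ℕ, ∃ e : Fin (n + 1) → E1,
    IsPath d r e ∧ d (e (Fin.last n)) = v ∧ r (e 0) = w}

/-- An infinite path of edges. -/
def IsInfPath (d r : E1 → E0) (e : ℕ → E1) : Prop := ∀ k : ℕ, d (e k) = r (e (k + 1))

/-- `S` is the negative orbit space `Orb⁻(v, e)` of some negative orbit `e` of `v`:
either `v` itself (when `v` is singular), or a finite path ending at a singular vertex
with range `v`, or an infinite path with range `v`. -/
def IsNegOrbitSet (d r : E1 → E0) (v : E0) (S : Set E0) : Prop :=
  (v ∈ Sg r ∧ S = {v}) ∨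
  (∃ n : ℕ, ∃ e : Fin (n + 1) → E1, IsPath d r e ∧ r (e 0) = v ∧
    d (e (Fin.last n)) ∈ Sg r ∧ S = insert v (Set.range (d ∘ e))) ∨
  (∃ e : ℕ → E1, IsInfPath d r e ∧ r (e 0) = v ∧ S = insert v (Set.range (d ∘ e)))

/-- The orbit space `Orb(v, e) = ⋃_{v' ∈ Orb⁻(v,e)} Orb⁺(v')`, expressed in terms of the
negative orbit space `S = Orb⁻(v, e)`. -/
def Orb (d r : E1 → E0) (S : Set E0) : Set E0 := ⋃ v ∈ S, OrbPlus d r v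

/-- A maximal head: a non-empty closed invariant set in which any two points can be
approximated by the positive orbit of a common vertex. -/
def MaximalHead (d r : E1 → E0) (X : Set E0) : Prop :=
  X.Nonempty ∧ IsClosed X ∧ Invariant d r X ∧
  ∀ v1 ∈ X, ∀ v2 ∈ X, ∀ V1 ∈ 𝓝 v1, ∀ V2 ∈ 𝓝 v2,
    ∃ w ∈ X, (OrbPlus d r w ∩ V1).Nonempty ∧ (OrbPlus d r w ∩ V2).Nonempty

/-- Hereditary set: `d (r⁻¹ (V)) ⊆ V`. -/
def Hereditary (d r : E1 → E0) (V : Set E0) : Prop := d '' (r ⁻¹' V) ⊆ V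

/-- Saturated set: every regular vertex all of whose received edges have domain in `V`
belongs to `V`. -/
def Saturated (d r : E1 → E0) (V : Set E0) : Prop :=
  ∀ v ∈ Rg r, d '' (r ⁻¹' {v}) ⊆ V → v ∈ V

/-- `H(V) = ⋃ₙ dⁿ ((rⁿ)⁻¹ (V))`. -/
def HSet (d r : E1 → E0) (V : Set E0) : Set E0 :=
  V ∪ {w | ∃ n : ℕ, ∃ e : Fin (n + 1) → E1,
    IsPath d r e ∧ r (e 0) ∈ V ∧ d (e (Fin.last n)) = w}

/-- The sequence `V₀ = V`, `V_{k+1} = V_k ∪ {v ∈ E⁰_rg : d (r⁻¹ (v)) ⊆ V_k}`. -/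
def SatSeq (d r : E1 → E0) (V : Set E0) : ℕ → Set E0
  | 0 => V
  | k + 1 => SatSeq d r V k ∪ {v | v ∈ Rg r ∧ d '' (r ⁻¹' {v}) ⊆ SatSeq d r V k}

/-- The saturation `S(V) = ⋃ₖ V_k`. -/
def SatSet (d r : E1 → E0) (V : Set E0) : Set E0 := ⋃ k, SatSeq d r V k

/-- Sources of the subgraph on a closed positively invariant set `X`, viewed in `E⁰`:
`X⁰_sce = X⁰ \ closure_{X⁰} (r (X¹))` where `X¹ = d⁻¹ (X⁰)`. -/
def SceIn (d r : E1 → E0) (X : Set E0) : Set E0 := X \ closure (r '' (d ⁻¹' X))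

/-- Vertices of the subgraph on `X` having a relative neighborhood with compact
`r`-preimage in `X¹ = d⁻¹(X⁰)`. -/
def FinIn (d r : E1 → E0) (X : Set E0) : Set E0 :=
  {v | v ∈ X ∧ ∃ V ∈ 𝓝 v, IsCompact (r ⁻¹' (V ∩ X) ∩ d ⁻¹' X)}

/-- Infinite receivers of the subgraph on `X`. -/
def InfIn (d r : E1 → E0) (X : Set E0) : Set E0 := X \ FinIn d r X

/-- Regular vertices of the subgraph on `X`. -/
def RgIn (d r : E1 → E0) (X : Set E0) : Set E0 := FinIn d r X \ closure (SceIn d r X)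

/-- Singular vertices of the subgraph on `X`. -/
def SgIn (d r : E1 → E0) (X : Set E0) : Set E0 := X \ RgIn d r X


section Aux

variable {E0 E1 : Type*} [TopologicalSpace E0] [TopologicalSpace E1]

lemma mem_orbPlus_self (d r : E1 → E0) (v : E0) : v ∈ OrbPlus d r v := Or.inl rfl

/-- Head of a path ending at `v` has domain in the orbit. -/
lemma head_mem_orbPlus (d r : E1 → E0) (v : E0) {n : ℕ} {p : Fin (n + 1) → E1}
    (hp : IsPath d r p) (hlast : d (p (Fin.last n)) = v) :
    d (p 0) ∈ OrbPlus d r v := by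
  cases n with
  | zero => exact Or.inl hlast
  | succ m =>
    have h0 : d (p (0 : Fin (m + 1)).castSucc) = r (p (0 : Fin (m + 1)).succ) := hp 0
    refine Or.inr ⟨m, p ∘ Fin.succ, ?_, ?_, ?_⟩
    · intro i
      have := hp i.succ
      simpa only [Function.comp_apply, Fin.succ_castSucc] using this
    · show d (p (Fin.last m).succ) = v
      rw [Fin.succ_last]; exact hlast
    · exact h0.symm

set_option linter.unusedSectionVars false
lemma posInv_orbPlus (d r : E1 → E0) (v : E0) : PosInv d r (OrbPlus d r v) := by
  intro e he
  rcases he with he | ⟨n, p, hp, hlast, hr0⟩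
  · exact Or.inr ⟨0, fun _ => e, fun i => i.elim0, he, rfl⟩
  · refine Or.inr ⟨n + 1, Fin.cons e p, ?_, ?_, ?_⟩
    · intro i
      refine Fin.cases ?_ ?_ i
      · simp only [Fin.castSucc_zero, Fin.cons_zero, Fin.succ_zero_eq_one]
        rw [show (1 : Fin (n+2)) = (0 : Fin (n+1)).succ from rfl, Fin.cons_succ]
        exact hr0.symm
      · intro j
        have h := hp j
        simp only [← Fin.succ_castSucc, Fin.cons_succ]
        exact h
    · rw [← Fin.succ_last, Fin.cons_succ]
      exact hlast
    · rw [Fin.cons_zero]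


/-- Positive invariance passes to closures (using that `d` is open and `r` continuous). -/
lemma posInv_closure {d r : E1 → E0} (hdo : IsOpenMap d) (hdc : Continuous d)
    (hr : Continuous r) {O : Set E0} (hO : PosInv d r O) : PosInv d r (closure O) := by
  intro e he
  rw [mem_closure_iff]
  intro V hVo hVmem
  have hopen : IsOpen (d '' (r ⁻¹' V)) := hdo _ (hVo.preimage hr)
  have hmem : d e ∈ d '' (r ⁻¹' V) := ⟨e, hVmem, rfl⟩
  obtain ⟨x, ⟨f, hfV, hfd⟩, hxO⟩ := mem_closure_iff.mp he _ hopen hmem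
  exact ⟨r f, hfV, hO f (hfd ▸ hxO)⟩

/-- Key compactness lemma: a regular-type vertex in the closure of receivers from `A`
receives an edge with domain in `closure A`. -/
lemma exists_edge_of_mem_closure [T2Space E0] {d r : E1 → E0}
    (hdc : Continuous d) (hr : Continuous r) {A : Set E0} {w : E0}
    (hw : w ∈ FinSet r)
    (hcl : w ∈ closure {u | ∃ f : E1, r f = u ∧ d f ∈ A}) :
    ∃ e : E1, r e = w ∧ d e ∈ closure A := by
  obtain ⟨V, hV, hK⟩ := hw
  set s : Set E1 := {f | d f ∈ A} ∩ r ⁻¹' V with hs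
  set F : Filter E1 := Filter.comap r (𝓝 w) ⊓ Filter.principal s with hF
  have hne : F.NeBot := by
    rw [hF, Filter.inf_principal_neBot_iff]
    intro U hU
    obtain ⟨W, hW, hWU⟩ := hU
    obtain ⟨u, huWV, f, hrf, hdf⟩ :=
      mem_closure_iff_nhds.mp hcl (W ∩ V) (Filter.inter_mem hW hV)
    exact ⟨f, hWU (by simp [hrf, huWV.1]), hdf, by simp [hrf, huWV.2]⟩
  have hle : F ≤ Filter.principal (r ⁻¹' V) := by
    refine le_trans inf_le_right (Filter.principal_mono.mpr ?_)
    exact fun f hf => hf.2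
  obtain ⟨e, heK, hce⟩ := hK hle
  refine ⟨e, ?_, ?_⟩
  · have h1 : ClusterPt e (Filter.comap r (𝓝 w)) := hce.mono inf_le_left
    have h2 : (Filter.map r (𝓝 e ⊓ Filter.comap r (𝓝 w))).NeBot := h1.neBot.map r
    have h3 : Filter.map r (𝓝 e ⊓ Filter.comap r (𝓝 w)) ≤ 𝓝 (r e) ⊓ 𝓝 w := by
      refine le_inf ?_ ?_
      · exact le_trans (Filter.map_mono inf_le_left) (hr.continuousAt)
      · exact le_trans (Filter.map_mono inf_le_right) Filter.map_comap_le
    exact eq_of_nhds_neBot (h2.mono h3)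
  · have h1 : ClusterPt e (Filter.principal s) := hce.mono inf_le_right
    have h2 : e ∈ closure s := mem_closure_iff_clusterPt.mpr h1
    have h3 : closure s ⊆ closure (d ⁻¹' A) :=
      closure_mono (fun f hf => hf.1)
    exact hdc.closure_preimage_subset A (h3 h2)

end Aux

theorem stmt5 [LocallyCompactSpace E0] [T2Space E0] [LocallyCompactSpace E1] [T2Space E1]
    (d r : E1 → E0) (hd : IsLocalHomeomorph d) (hr : Continuous r)
    (v : E0) :
    PosInv d r (closure (OrbPlus d r v)) ∧
    ((v ∈ Sg r ∨
      ¬ (∃ U ∈ 𝓝 v, U ∩ OrbPlus d r v ⊆ {v}) ∨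
      (∃ n : ℕ, ∃ e : Fin (n + 1) → E1,
        IsPath d r e ∧ d (e (Fin.last n)) = v ∧ r (e 0) = v)) →
      NegInv d r (closure (OrbPlus d r v))) := by
  have hX : PosInv d r (closure (OrbPlus d r v)) :=
    posInv_closure hd.isOpenMap hd.continuous hr (posInv_orbPlus d r v)
  refine ⟨hX, ?_⟩
  intro hyp w hw
  obtain ⟨hwX, hwRg⟩ := hw
  have hwFin : w ∈ FinSet r := hwRg.1
  set B : Set E0 := {u | ∃ f : E1, r f = u ∧ d f ∈ OrbPlus d r v} with hB
  have hOB : OrbPlus d r v \ {v} ⊆ B := by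
    rintro u ⟨hu, hune⟩
    rcases hu with h | ⟨n, p, hp, hlast, hr0⟩
    · exact absurd h hune
    · exact ⟨p 0, hr0, head_mem_orbPlus d r v hp hlast⟩
  by_cases hcase : w ∈ closure (OrbPlus d r v \ {v})
  · obtain ⟨e, hre, hde⟩ := exists_edge_of_mem_closure hd.continuous hr hwFin
      (closure_mono hOB hcase)
    exact ⟨e, hre, hde⟩
  · have hwv : w = v := by
      have hsplit : OrbPlus d r v ⊆ {v} ∪ (OrbPlus d r v \ {v}) := by
        intro x hx
        by_cases hxv : x = v
        · exact Or.inl hxv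
        · exact Or.inr ⟨hx, hxv⟩
      have : w ∈ closure ({v} ∪ (OrbPlus d r v \ {v})) := closure_mono hsplit hwX
      rw [closure_union] at this
      rcases this with h | h
      · rwa [closure_singleton] at h
      · exact absurd h hcase
    subst hwv
    rcases hyp with hsg | hniso | ⟨n, p, hp, hlast, hr0⟩
    · exact absurd hwRg hsg
    · exfalso
      apply hniso
      refine ⟨(closure (OrbPlus d r w \ {w}))ᶜ, ?_, ?_⟩
      · exact (isClosed_closure.isOpen_compl).mem_nhds hcase
      · intro x ⟨hx1, hx2⟩
        by_contra hxv
        exact hx1 (subset_closure ⟨hx2, hxv⟩)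
    · exact ⟨p 0, hr0, subset_closure (head_mem_orbPlus d r w hp hlast)⟩
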